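/- arXiv:2406.05953 — 3 statements merged into one kernel-verified Lean document; each statement's English description precedes it below -/
import Mathlib

section
/- Let τ > 0, r ∈ ℝ, and let n ≥ 1 be a natural number with n·exp(r/τ) ≥ 1. Then there exists no real number V satisfying the fixed-point equation V = τ·log(n·exp((r+V)/τ) + exp(r/τ)). (The value of the loopy MDP of Example 2 diverges when 1 ≤ n·exp(r/τ).) -/
/-- Example 2 (divergence): if `n·exp(r/τ) ≥ 1`, then no real number `V` satisfies the
soft Bellman fixed-point equation `V = τ·log(n·exp((r+V)/τ) + exp(r/τ))`. -/
theorem stmt2 (τ r : ℝ) (hτ : 0 < τ) (n : ℕ) (hn : 1 ≤ n)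
    (hdiv : 1 ≤ (n : ℝ) * Real.exp (r / τ)) :
    ¬ ∃ V : ℝ, V = τ * Real.log ((n : ℝ) * Real.exp ((r + V) / τ) + Real.exp (r / τ)) := by
  rintro ⟨V, hV⟩
  have hn' : (0:ℝ) < n := by exact_mod_cast hn
  have hS : (0:ℝ) < (n : ℝ) * Real.exp ((r + V) / τ) + Real.exp (r / τ) := by positivity
  have hlog : V / τ = Real.log ((n : ℝ) * Real.exp ((r + V) / τ) + Real.exp (r / τ)) := by
    conv_lhs => rw [hV]
    field_simp
  have hexp : Real.exp (V / τ) =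
      (n : ℝ) * Real.exp ((r + V) / τ) + Real.exp (r / τ) := by
    rw [hlog, Real.exp_log hS]
  have hsplit : Real.exp ((r + V) / τ) = Real.exp (r / τ) * Real.exp (V / τ) := by
    rw [← Real.exp_add]; ring_nf
  rw [hsplit] at hexp
  nlinarith [Real.exp_pos (V / τ), Real.exp_pos (r / τ)]
end

section
/- Let f : [0,1] → ℝ be strictly convex with f(0) = 0 and f(1) = 0, and let g : ℝ → ℝ be strictly increasing. For each n ≥ 1 define the range L(n) = (sup over π ∈ Δ_n of g(Σ_a f(π(a)))) − (inf over π ∈ Δ_n of g(Σ_a f(π(a)))). Then L(n) = g(0) − g(n·f(1/n)), and L is strictly increasing in n: for all 1 ≤ n < m, L(n) < L(m). (Theorem: the range of a standard regularizer satisfying Assumption 2 grows with the number of actions.) -/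
/-- Theorem: the range of a standard regularizer `Ω(π) = g(∑ a, f (π a))` satisfying
Assumption 2 equals `g 0 − g (n·f(1/n))` on `Δ_n`, and grows strictly with the number
of actions. -/
theorem stmt8 (f : ℝ → ℝ) (hf : StrictConvexOn ℝ (Set.Icc (0 : ℝ) 1) f)
    (h0 : f 0 = 0) (h1 : f 1 = 0) (g : ℝ → ℝ) (hg : StrictMono g)
    (L : ℕ → ℝ)
    (hL : ∀ n, 1 ≤ n →
      L n = sSup {x : ℝ | ∃ π : Fin n → ℝ, (∀ a, 0 ≤ π a) ∧ (∑ a, π a = 1) ∧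
              x = g (∑ a, f (π a))}
          - sInf {x : ℝ | ∃ π : Fin n → ℝ, (∀ a, 0 ≤ π a) ∧ (∑ a, π a = 1) ∧
              x = g (∑ a, f (π a))}) :
    (∀ n, 1 ≤ n → L n = g 0 - g ((n : ℝ) * f (1 / n))) ∧
    (∀ n m : ℕ, 1 ≤ n → n < m → L n < L m) := by
  have hfc := hf.convexOn
  have hfle : ∀ x : ℝ, 0 ≤ x → x ≤ 1 → f x ≤ 0 := by
    intro x hx0 hx1
    have := hfc.2 (Set.mem_Icc.mpr ⟨le_refl (0:ℝ), zero_le_one⟩)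
      (Set.mem_Icc.mpr ⟨zero_le_one, le_refl (1:ℝ)⟩)
      (show (0:ℝ) ≤ 1 - x by linarith) hx0 (by ring)
    simpa [h0, h1] using this
  have key : ∀ n, 1 ≤ n → L n = g 0 - g ((n : ℝ) * f (1 / n)) := by
    intro n hn
    haveI : NeZero n := ⟨by omega⟩
    have hnpos : (0:ℝ) < n := by exact_mod_cast Nat.pos_of_ne_zero (by omega)
    rw [hL n hn]
    set S := {x : ℝ | ∃ π : Fin n → ℝ, (∀ a, 0 ≤ π a) ∧ (∑ a, π a = 1) ∧
              x = g (∑ a, f (π a))} with hS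
    have hg0 : g 0 ∈ S := by
      refine ⟨fun a => if a = 0 then 1 else 0, fun a => by positivity, ?_, ?_⟩
      · simp [Finset.sum_ite_eq']
      · congr 1
        refine (Finset.sum_eq_zero ?_).symm
        intro a _
        by_cases h : a = 0 <;> simp [h, h0, h1]
    have hgu : g ((n:ℝ) * f (1/n)) ∈ S := by
      refine ⟨fun _ => 1/n, fun a => by positivity, ?_, ?_⟩
      · simp [Finset.sum_const]
      · simp [Finset.sum_const, mul_comm]
    have hub : ∀ x ∈ S, x ≤ g 0 := by
      rintro x ⟨π, hπ0, hπ1, rfl⟩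
      refine hg.monotone (Finset.sum_nonpos fun a _ => ?_)
      refine hfle _ (hπ0 a) ?_
      have := Finset.single_le_sum (f := π) (fun i _ => hπ0 i) (Finset.mem_univ a)
      linarith [hπ1 ▸ this]
    have hlb : ∀ x ∈ S, g ((n:ℝ) * f (1/n)) ≤ x := by
      rintro x ⟨π, hπ0, hπ1, rfl⟩
      refine hg.monotone ?_
      have hj := hfc.map_sum_le (t := Finset.univ) (w := fun _ : Fin n => (1:ℝ)/n)
        (p := π) (fun i _ => by positivity)
        (by simp [Finset.sum_const])
        (fun i _ => ⟨hπ0 i, by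
          have := Finset.single_le_sum (f := π) (fun j _ => hπ0 j) (Finset.mem_univ i)
          linarith [hπ1 ▸ this]⟩)
      simp only [smul_eq_mul] at hj
      rw [← Finset.mul_sum, ← Finset.mul_sum, hπ1, mul_one] at hj
      calc (n:ℝ) * f (1/n) ≤ (n:ℝ) * ((1/n) * ∑ i, f (π i)) := by
            exact mul_le_mul_of_nonneg_left hj (le_of_lt hnpos)
        _ = ∑ i, f (π i) := by field_simp
    have hsup : sSup S = g 0 := le_antisymm (csSup_le ⟨_, hg0⟩ hub) (le_csSup ⟨g 0, hub⟩ hg0)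
    have hinf : sInf S = g ((n:ℝ) * f (1/n)) :=
      le_antisymm (csInf_le ⟨_, hlb⟩ hgu) (le_csInf ⟨_, hg0⟩ hlb)
    rw [hsup, hinf]
  refine ⟨key, fun n m hn hnm => ?_⟩
  have hnpos : (0:ℝ) < n := by exact_mod_cast Nat.pos_of_ne_zero (by omega)
  have hmpos : (0:ℝ) < m := by exact_mod_cast Nat.pos_of_ne_zero (by omega)
  have hnm' : (n:ℝ) < m := by exact_mod_cast hnm
  have hdec : (m:ℝ) * f (1/m) < (n:ℝ) * f (1/n) := by
    have hx : 1/(n:ℝ) ∈ Set.Icc (0:ℝ) 1 := ⟨by positivity, by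
      rw [div_le_one hnpos]; exact_mod_cast hn⟩
    have hy : (0:ℝ) ∈ Set.Icc (0:ℝ) 1 := ⟨le_refl _, zero_le_one⟩
    have hne : (1:ℝ)/n ≠ 0 := by positivity
    have hsc := hf.2 hx hy hne (show (0:ℝ) < (n:ℝ)/m by positivity)
      (show (0:ℝ) < 1 - (n:ℝ)/m by rw [sub_pos, div_lt_one hmpos]; exact hnm') (by ring)
    have heq : ((n:ℝ)/m) • ((1:ℝ)/n) + (1 - (n:ℝ)/m) • (0:ℝ) = 1/m := by
      field_simp
      simp only [smul_eq_mul, mul_zero, add_zero]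
      field_simp
    rw [heq, h0] at hsc
    simp only [smul_eq_mul, mul_zero, add_zero] at hsc
    calc (m:ℝ) * f (1/m) < (m:ℝ) * ((n:ℝ)/m * f (1/n)) :=
          mul_lt_mul_of_pos_left hsc hmpos
      _ = (n:ℝ) * f (1/n) := by field_simp
  rw [key n hn, key m (by omega)]
  have := hg hdec
  linarith
end

section
/- Let τ > 0, let n ≥ 2 be a natural number, let r < −τ, and set τ' = τ/log n. Then n·exp(r/τ') < 1 and there exists a real number V satisfying the decoupled soft Bellman fixed-point equation V = τ'·log(n·exp((r+V)/τ') + exp(r/τ')), namely V = r − τ'·log(1 − n·exp(r/τ')). (Proposition 1 applied to the loopy MDP of Example 2: with decoupled entropy, the regularized Bellman equation converges whenever r < −τ.) -/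
/-- Proposition 1 for the loopy MDP of Example 2: with decoupled entropy (effective
temperature `τ' = τ/log n`) and `r < −τ`, we have `n·exp(r/τ') < 1` and the decoupled
soft Bellman fixed-point equation has a solution, namely
`V = r − τ'·log(1 − n·exp(r/τ'))`. -/
theorem stmt14 (τ r : ℝ) (hτ : 0 < τ) (n : ℕ) (hn : 2 ≤ n) (hr : r < -τ)
    (τ' : ℝ) (hτ' : τ' = τ / Real.log n) :
    (n : ℝ) * Real.exp (r / τ') < 1 ∧
    ∃ V : ℝ, V = r - τ' * Real.log (1 - (n : ℝ) * Real.exp (r / τ')) ∧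
      V = τ' * Real.log ((n : ℝ) * Real.exp ((r + V) / τ') + Real.exp (r / τ')) := by
  have hn1 : (1 : ℝ) < (n : ℝ) := by exact_mod_cast Nat.lt_of_lt_of_le one_lt_two hn
  have hn0 : (0 : ℝ) < (n : ℝ) := by linarith
  have hL : 0 < Real.log n := Real.log_pos hn1
  have hτ'pos : 0 < τ' := by rw [hτ']; positivity
  have hτ'ne : τ' ≠ 0 := ne_of_gt hτ'pos
  -- r/τ' < - log n
  have hdiv : r / τ' < -Real.log n := by
    rw [hτ', div_div_eq_mul_div]
    rw [div_lt_iff₀ hτ]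
    have : r * Real.log n < -τ * Real.log n := by
      apply mul_lt_mul_of_pos_right hr hL
    linarith
  set x : ℝ := (n : ℝ) * Real.exp (r / τ') with hx
  have hxpos : 0 < x := by positivity
  have hx1 : x < 1 := by
    have : Real.exp (r / τ') < Real.exp (-Real.log n) := Real.exp_lt_exp.2 hdiv
    have h2 : Real.exp (-Real.log n) = ((n : ℝ))⁻¹ := by
      rw [Real.exp_neg, Real.exp_log hn0]
    calc x < (n : ℝ) * ((n : ℝ))⁻¹ := by rw [hx]; nlinarith [this]
      _ = 1 := mul_inv_cancel₀ (ne_of_gt hn0)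
  refine ⟨hx1, r - τ' * Real.log (1 - x), rfl, ?_⟩
  have h1x : 0 < 1 - x := by linarith
  set V := r - τ' * Real.log (1 - x) with hV
  have hexpV : Real.exp (V / τ') = Real.exp (r / τ') / (1 - x) := by
    rw [hV]
    rw [show (r - τ' * Real.log (1 - x)) / τ' = r / τ' - Real.log (1 - x) by
      field_simp]
    rw [Real.exp_sub, Real.exp_log h1x]
  have key : (n : ℝ) * Real.exp ((r + V) / τ') + Real.exp (r / τ')
      = Real.exp (r / τ') / (1 - x) := by
    rw [show (r + V) / τ' = r / τ' + V / τ' by ring, Real.exp_add, hexpV]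
    field_simp
    ring
  rw [key, Real.log_div (Real.exp_ne_zero _) (ne_of_gt h1x), Real.log_exp]
  rw [hV]
  field_simp
end
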